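/- For any vector A = (a_1,...,a_m) with coordinates in {0,1,2}, the element S(A) := R(Δ(A;t))·(T−1) lies in the set M = {0, ±(T−1), ±T(T−1), ±T^2(T−1)} ⊆ K = Z[T]/(T^3−1). -/

import Mathlib

open Polynomial

/-- The sum of coefficients of `g` over exponents `≡ i (mod 3)`. -/
noncomputable def Rcoef (i : ℕ) (g : Polynomial ℤ) : ℤ :=
  ∑ h ∈ g.support.filter (fun h => h % 3 = i), g.coeff h

/-- The ring `K = ℤ[T]/(T^3 - 1)`. -/
abbrev K3 := Polynomial ℤ ⧸ Ideal.span {(X : Polynomial ℤ) ^ 3 - 1}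

/-- The quotient map `ℤ[T] → K`. -/
noncomputable def mk3 : Polynomial ℤ →+* K3 := Ideal.Quotient.mk _

/-- The map `R = R^{(3)} : ℤ[t] → K`, `g ↦ R_0(g) + R_1(g)T + R_2(g)T^2`. -/
noncomputable def Rmap3 (g : Polynomial ℤ) : K3 :=
  mk3 (C (Rcoef 0 g)) + mk3 (C (Rcoef 1 g)) * mk3 X + mk3 (C (Rcoef 2 g)) * mk3 X ^ 2

/-- `a + bT + cT²` is special if `a = b = c` or `|a-b|+|a-c|+|b-c| = 2`. -/
def Special (a b c : ℤ) : Prop :=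
  (a = b ∧ b = c) ∨ |a - b| + |a - c| + |b - c| = 2

/-- `Δ(a;t) = t + t² + ⋯ + tᵃ` (with `Δ(0;t) = 0`). -/
noncomputable def Delta1 (a : ℕ) : Polynomial ℤ := ∑ h ∈ Finset.Icc 1 a, X ^ h

/-- `Δ(A;t)` computed from the reversed list (last coordinate first). -/
noncomputable def DeltaRev : List ℕ → Polynomial ℤ
  | [] => 1
  | [a] => Delta1 a
  | a :: b :: rest => DeltaRev (b :: rest) * Delta1 a - DeltaRev rest * X ^ (a + 1)

/-- `Δ(a₁,…,a_m;t)`, defined by `Δ(∅)=1`, `Δ(A,a) = Δ(A)·Δ(a) - Δ(A')·t^{a+1}`. -/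
noncomputable def Delta (A : List ℕ) : Polynomial ℤ := DeltaRev A.reverse

/-- `S(A) := R(Δ(A;t))·(T-1) ∈ K`. -/
noncomputable def Smap (A : List ℕ) : K3 := Rmap3 (Delta A) * (mk3 X - 1)

/-- The set `M = {0, ±(T-1), ±T(T-1), ±T²(T-1)} ⊆ K`. -/
noncomputable def Mset : Set K3 :=
  {0, mk3 X - 1, -(mk3 X - 1), mk3 X * (mk3 X - 1), -(mk3 X * (mk3 X - 1)),
    mk3 X ^ 2 * (mk3 X - 1), -(mk3 X ^ 2 * (mk3 X - 1))}

/-! ### Auxiliary machinery -/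

noncomputable def uK : K3 := mk3 X

lemma uK_def : uK = mk3 X := rfl

lemma hu3 : uK ^ 3 = 1 := by
  have : mk3 (X ^ 3) = mk3 1 := by
    apply Ideal.Quotient.eq.mpr
    exact Ideal.subset_span (Set.mem_singleton _)
  simpa [uK, map_pow] using this

lemma upow (h : ℕ) : uK ^ h = uK ^ (h % 3) := by
  conv_lhs => rw [← Nat.mod_add_div h 3]
  rw [pow_add, pow_mul, hu3, one_pow, mul_one]

lemma Rmap3_eq (g : Polynomial ℤ) : Rmap3 g = mk3 g := by
  have hg : mk3 g = ∑ h ∈ g.support, mk3 (C (g.coeff h)) * uK ^ h := by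
    conv_lhs => rw [g.as_sum_support]
    rw [map_sum]
    refine Finset.sum_congr rfl fun h _ => ?_
    rw [← C_mul_X_pow_eq_monomial, map_mul, map_pow]
    rfl
  have hmaps : ∀ x ∈ g.support, x % 3 ∈ Finset.range 3 :=
    fun x _ => Finset.mem_range.mpr (Nat.mod_lt _ (by norm_num))
  have hfib : ∑ h ∈ g.support, mk3 (C (g.coeff h)) * uK ^ h
      = ∑ i ∈ Finset.range 3, (mk3 (C (Rcoef i g))) * uK ^ i := by
    rw [← Finset.sum_fiberwise_of_maps_to hmaps]
    refine Finset.sum_congr rfl fun i _ => ?_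
    rw [Rcoef, map_sum, map_sum, Finset.sum_mul]
    refine Finset.sum_congr rfl fun h hh => ?_
    have h3 : h % 3 = i := by simpa using (Finset.mem_filter.mp hh).2
    rw [upow h, h3]
  rw [hg, hfib]
  rw [Finset.sum_range_succ, Finset.sum_range_succ, Finset.sum_range_succ,
    Finset.sum_range_zero]
  rw [Rmap3, uK_def]
  ring

noncomputable def dval (a : ℕ) : K3 := mk3 (Delta1 a)

lemma dval0 : dval 0 = 0 := by simp [dval, Delta1]

lemma dval1 : dval 1 = uK := by simp [dval, Delta1, uK_def]

lemma dval2 : dval 2 = uK + uK ^ 2 := by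
  have : Delta1 2 = X + X ^ 2 := by
    rw [Delta1, show Finset.Icc 1 2 = {1, 2} from rfl]
    simp
  rw [dval, this, map_add, map_pow, uK_def]

noncomputable def Sv (L : List ℕ) : K3 := mk3 (DeltaRev L) * (uK - 1)

noncomputable def prevS : List ℕ → K3
  | [] => 0
  | _ :: t => Sv t

lemma Sv_cons (a : ℕ) (L : List ℕ) :
    Sv (a :: L) = Sv L * dval a - prevS L * uK ^ (a + 1) := by
  cases L with
  | nil =>
      show mk3 (Delta1 a) * (uK - 1) = mk3 1 * (uK - 1) * dval a - 0 * uK ^ (a + 1)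
      rw [map_one, dval]
      try ring
  | cons b t =>
      show mk3 (DeltaRev (b :: t) * Delta1 a - DeltaRev t * X ^ (a + 1)) * (uK - 1) = _
      rw [map_sub, map_mul, map_mul, map_pow]
      show _ = mk3 (DeltaRev (b :: t)) * (uK - 1) * dval a
        - mk3 (DeltaRev t) * (uK - 1) * uK ^ (a + 1)
      rw [dval, ← uK_def]
      ring

def U6 (c : K3) : Prop :=
  c = 1 ∨ c = -1 ∨ c = uK ∨ c = -uK ∨ c = uK ^ 2 ∨ c = -uK ^ 2

lemma U6_neg {c : K3} (h : U6 c) : U6 (-c) := by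
  rcases h with h|h|h|h|h|h <;> subst h <;> unfold U6 <;>
    first
      | (left; ring1)
      | (right; left; ring1)
      | (right; right; left; ring1)
      | (right; right; right; left; ring1)
      | (right; right; right; right; left; ring1)
      | (right; right; right; right; right; ring1)

lemma U6_mul_u {c : K3} (h : U6 c) : U6 (c * uK) := by
  rcases h with h|h|h|h|h|h <;> subst h <;> unfold U6 <;>
    first
      | (left; linear_combination hu3)
      | (right; left; linear_combination -hu3)
      | (right; right; left; ring1)
      | (right; right; right; left; ring1)
      | (right; right; right; right; left; ring1)
      | (right; right; right; right; right; ring1)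

def PairInv (x y : K3) : Prop :=
  ∃ c, U6 c ∧ ((x = 0 ∧ y = c * (uK - 1)) ∨ (x = c * (uK - 1) ∧ y = 0) ∨
    (x = c * (uK - 1) ∧ y = c * (uK * (uK - 1))) ∨
    (x = c * (uK - 1) ∧ y = -(c * (uK - 1))))

lemma PairInv_step {x y : K3} (a : ℕ) (ha : a ≤ 2) (h : PairInv x y) :
    PairInv y (y * dval a - x * uK ^ (a + 1)) := by
  obtain ⟨c, hc, hcase⟩ := h
  interval_cases a
  · rcases hcase with ⟨hx, hy⟩|⟨hx, hy⟩|⟨hx, hy⟩|⟨hx, hy⟩ <;> subst hx <;> subst hy <;>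
      rw [dval0]
    · exact ⟨c, hc, Or.inr (Or.inl ⟨rfl, by ring⟩)⟩
    · exact ⟨-(c * uK), U6_neg (U6_mul_u hc), Or.inl ⟨rfl, by ring⟩⟩
    · exact ⟨c * uK, U6_mul_u hc, Or.inr (Or.inr (Or.inr ⟨by ring, by ring⟩))⟩
    · exact ⟨-c, U6_neg hc, Or.inr (Or.inr (Or.inl ⟨by ring, by ring⟩))⟩
  · rcases hcase with ⟨hx, hy⟩|⟨hx, hy⟩|⟨hx, hy⟩|⟨hx, hy⟩ <;> subst hx <;> subst hy <;>
      rw [dval1]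
    · exact ⟨c, hc, Or.inr (Or.inr (Or.inl ⟨rfl, by ring⟩))⟩
    · exact ⟨-(c * uK * uK), U6_neg (U6_mul_u (U6_mul_u hc)), Or.inl ⟨rfl, by ring⟩⟩
    · exact ⟨c * uK, U6_mul_u hc, Or.inr (Or.inl ⟨by ring, by ring⟩)⟩
    · exact ⟨-c, U6_neg hc,
        Or.inr (Or.inr (Or.inr ⟨by ring, by linear_combination (-c) * hu3⟩))⟩
  · rcases hcase with ⟨hx, hy⟩|⟨hx, hy⟩|⟨hx, hy⟩|⟨hx, hy⟩ <;> subst hx <;> subst hy <;>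
      rw [dval2]
    · exact ⟨c, hc,
        Or.inr (Or.inr (Or.inr ⟨rfl, by linear_combination c * hu3⟩))⟩
    · exact ⟨-c, U6_neg hc, Or.inl ⟨rfl, by linear_combination (-c * (uK - 1)) * hu3⟩⟩
    · exact ⟨c * uK, U6_mul_u hc,
        Or.inr (Or.inr (Or.inl ⟨by ring, by ring⟩))⟩
    · exact ⟨-c, U6_neg hc, Or.inr (Or.inl ⟨by ring, by linear_combination (-c * uK) * hu3⟩)⟩

lemma PairInv_DeltaRev : ∀ L : List ℕ, (∀ i ∈ L, i ≤ 2) → PairInv (prevS L) (Sv L) := by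
  intro L
  induction L with
  | nil =>
      intro _
      exact ⟨1, Or.inl rfl, Or.inl ⟨rfl, by show mk3 1 * (uK - 1) = _; rw [map_one]⟩⟩
  | cons a t ih =>
      intro hL
      have ha : a ≤ 2 := hL a List.mem_cons_self
      have ht : ∀ i ∈ t, i ≤ 2 := fun i hi => hL i (List.mem_cons_of_mem a hi)
      have := PairInv_step a ha (ih ht)
      rw [← Sv_cons] at this
      exact this

lemma mem_of_U6 {c : K3} (hc : U6 c) : c * (uK - 1) ∈ Mset := by
  rcases hc with h|h|h|h|h|h <;> subst h <;> rw [uK_def] <;>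
    simp only [Mset, Set.mem_insert_iff, Set.mem_singleton_iff] <;>
    first
      | (left; first | ring1 | trivial)
      | (right; left; first | ring1 | trivial)
      | (right; right; left; first | ring1 | trivial)
      | (right; right; right; left; first | ring1 | trivial)
      | (right; right; right; right; left; first | ring1 | trivial)
      | (right; right; right; right; right; left; first | ring1 | trivial)
      | (right; right; right; right; right; right; first | ring1 | trivial)
      | trivial

theorem Smap_mem_Mset (A : List ℕ) (hA : ∀ i ∈ A, i ≤ 2) : Smap A ∈ Mset := by
  have h := PairInv_DeltaRev A.reverse (fun i hi => hA i (List.mem_reverse.mp hi))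
  have hS : Smap A = Sv A.reverse := by
    rw [Smap, Rmap3_eq]; rfl
  rw [hS]
  obtain ⟨c, hc, hcase⟩ := h
  rcases hcase with ⟨_, hy⟩|⟨_, hy⟩|⟨_, hy⟩|⟨_, hy⟩ <;> rw [hy]
  · exact mem_of_U6 hc
  · exact Or.inl rfl
  · have : c * (uK * (uK - 1)) = (c * uK) * (uK - 1) := by ring
    rw [this]; exact mem_of_U6 (U6_mul_u hc)
  · have : -(c * (uK - 1)) = (-c) * (uK - 1) := by ring
    rw [this]; exact mem_of_U6 (U6_neg hc)
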